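/- arXiv:1907.12150 — 6 statements merged into one kernel-verified Lean document; each statement's English description precedes it below -/
import Mathlib

section
/- Let φ_U, φ_Z, ρ, τ_Z be real numbers with τ_Z > 0, |φ_U| < 1 and |φ_Z| < 1. For each n ≥ 3 let M_n = τ_Z · (A_n(φ_Z) − 4ρ² · A_n(φ_U)⁻¹). Then for every fixed pair of natural-number indices i, j, the sequence n ↦ (M_n)_{ij} (defined for all n > max(i,j)) converges, as n → ∞, to: τ_Z·[2 − 2ρ²/√(1−φ_U²)] if i = j; τ_Z·[−φ_Z − 2ρ²·φ_U/(√(1−φ_U²)·(1+√(1−φ_U²)))] if |i−j| = 1; and τ_Z·[−2ρ²·φ_U^{|i−j|}/(√(1−φ_U²)·(1+√(1−φ_U²))^{|i−j|})] if |i−j| > 1. -/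
open Matrix Filter Topology

section scalar
variable {φ : ℝ} (hφ : |φ| < 1)

noncomputable def sR (φ : ℝ) : ℝ := Real.sqrt (1 - φ^2)
noncomputable def rR (φ : ℝ) : ℝ := φ / (1 + sR φ)

include hφ

lemma sR_pos : 0 < sR φ := Real.sqrt_pos.2 (by nlinarith [abs_nonneg φ, sq_abs φ, hφ])

lemma sR_sq : sR φ ^ 2 = 1 - φ^2 :=
  Real.sq_sqrt (by nlinarith [abs_nonneg φ, sq_abs φ, hφ])

lemma one_add_sR_pos : 0 < 1 + sR φ := by linarith [sR_pos hφ]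

lemma key1 : 2 * rR φ = φ * (1 + (rR φ)^2) := by
  have hs := sR_pos hφ
  have hs2 := sR_sq hφ
  unfold rR
  field_simp
  linear_combination (-φ) * hs2

lemma key2 : φ * rR φ = 1 - sR φ := by
  have hs := sR_pos hφ
  have hs2 := sR_sq hφ
  unfold rR
  field_simp
  linear_combination hs2

lemma key3 : rR φ - φ = -(sR φ * rR φ) := by
  have hs := sR_pos hφ
  have hs2 := sR_sq hφ
  unfold rR
  field_simp
  ring

lemma rR_abs_lt : |rR φ| < 1 := by
  have hs := sR_pos hφ
  rw [rR, abs_div, abs_of_pos (one_add_sR_pos hφ), div_lt_one (one_add_sR_pos hφ)]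
  linarith

lemma one_sub_rR_pow_pos {n : ℕ} (hn : 1 ≤ n) : 0 < 1 - (rR φ)^n := by
  have h : |rR φ ^ n| < 1 := by
    rw [abs_pow]
    exact pow_lt_one₀ (abs_nonneg _) (rR_abs_lt hφ) (by omega)
  have := abs_lt.1 h
  linarith [this.2]

/-- The middle identity: for `1 ≤ d ≤ n - 1`,
`2 g(d) - φ (g(d-1) + g(d+1)) = 0` where `g x = r^x + r^(n-x)`. -/
lemma keyid {n d : ℕ} (hn : 2 ≤ n) (hd1 : 1 ≤ d) (hd2 : d ≤ n - 1) :
    2 * ((rR φ)^d + (rR φ)^(n-d)) -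
      φ * (((rR φ)^(d-1) + (rR φ)^(n-(d-1))) + ((rR φ)^(d+1) + (rR φ)^(n-(d+1)))) = 0 := by
  set r := rR φ with hr
  obtain ⟨e, rfl⟩ : ∃ e, d = e + 1 := ⟨d - 1, by omega⟩
  obtain ⟨f, hf⟩ : ∃ f, n = e + f + 2 := ⟨n - e - 2, by omega⟩
  subst hf
  have h1 : e + f + 2 - (e+1) = f + 1 := by omega
  have h2 : e + 1 - 1 = e := by omega
  have h3 : e + f + 2 - e = f + 2 := by omega
  have h4 : e + f + 2 - (e + 1 + 1) = f := by omega
  rw [h1, h2, h3, h4]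
  have hk := key1 hφ
  rw [← hr] at hk
  linear_combination (r^e + r^f) * hk

/-- The diagonal identity. -/
lemma keyid0 {n : ℕ} (hn : 2 ≤ n) :
    2 * (1 + (rR φ)^n) - φ * (((rR φ)^1 + (rR φ)^(n-1)) + ((rR φ)^1 + (rR φ)^(n-1)))
      = 2 * sR φ * (1 - (rR φ)^n) := by
  set r := rR φ with hr
  set s := sR φ with hs
  obtain ⟨c, rfl⟩ : ∃ c, n = c + 2 := ⟨n - 2, by omega⟩
  have h1 : c + 2 - 1 = c + 1 := by omega
  rw [h1]
  have hk2 := key2 hφ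
  have hk3 := key3 hφ
  rw [← hr, ← hs] at hk2 hk3
  linear_combination (-2 : ℝ) * hk2 + 2 * r^(c+1) * hk3

end scalar

/-- The unscaled conditional autoregressive (CAR) precision matrix of the ring graph on
`n` vertices: entries are `2` on the diagonal, `-φ` at positions with `|i - j| = 1` or
`|i - j| = n - 1`, and `0` otherwise. -/
noncomputable def ringA (n : ℕ) (φ : ℝ) : Matrix (Fin n) (Fin n) ℝ :=
  Matrix.of fun i j =>
    if i = j then 2
    else if Nat.dist i.val j.val = 1 ∨ Nat.dist i.val j.val = n - 1 then -φ
    else 0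

noncomputable def ringB (n : ℕ) (φ : ℝ) : Matrix (Fin n) (Fin n) ℝ :=
  Matrix.of fun i j =>
    ((rR φ)^(Nat.dist i.val j.val) + (rR φ)^(n - Nat.dist i.val j.val)) /
      (2 * sR φ * (1 - (rR φ)^n))

section matrixpart
variable {n : ℕ} {φ : ℝ}

lemma succ_val (hn : 3 ≤ n) (i : Fin n) :
    haveI : NeZero n := ⟨by omega⟩
    (i + 1).val = if i.val + 1 = n then 0 else i.val + 1 := by
  haveI : NeZero n := ⟨by omega⟩
  rw [Fin.val_add, Fin.val_one']
  rw [Nat.mod_eq_of_lt (show 1 < n by omega)]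
  split_ifs with h
  · rw [h, Nat.mod_self]
  · exact Nat.mod_eq_of_lt (by omega)

lemma pred_val (hn : 3 ≤ n) (i : Fin n) :
    haveI : NeZero n := ⟨by omega⟩
    (i - 1).val = if i.val = 0 then n - 1 else i.val - 1 := by
  haveI : NeZero n := ⟨by omega⟩
  rw [Fin.sub_def, Fin.val_one']
  rw [Nat.mod_eq_of_lt (show 1 < n by omega)]
  split_ifs with h
  · simp only [h, Nat.add_zero]
    exact Nat.mod_eq_of_lt (by omega)
  · have h1 : n - 1 + i.val = (i.val - 1) + n := by omega
    rw [h1]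
    exact (Nat.add_mod_right _ _).trans (Nat.mod_eq_of_lt (by omega))

lemma entryA (hn : 3 ≤ n) (i k : Fin n) :
    haveI : NeZero n := ⟨by omega⟩
    ringA n φ i k = (if k = i then (2:ℝ) else 0) + (if k = i + 1 then -φ else 0)
      + (if k = i - 1 then -φ else 0) := by
  haveI : NeZero n := ⟨by omega⟩
  have ha : i.val < n := i.isLt
  have hc : k.val < n := k.isLt
  have e1 : (i = k) ↔ (i.val = k.val) := Fin.ext_iff
  have e1' : (k = i) ↔ (k.val = i.val) := Fin.ext_iff
  have e2 : (k = i + 1) ↔ (k.val = if i.val + 1 = n then 0 else i.val + 1) := by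
    rw [Fin.ext_iff, succ_val hn]
  have e3 : (k = i - 1) ↔ (k.val = if i.val = 0 then n - 1 else i.val - 1) := by
    rw [Fin.ext_iff, pred_val hn]
  simp only [ringA, Matrix.of_apply, e1, e1', e2, e3, Nat.dist.eq_1]
  by_cases hA : i.val + 1 = n <;> by_cases hB : i.val = 0 <;>
    simp only [hA, hB, if_true, if_false, eq_self_iff_true] <;>
    split_ifs <;> first | ring1 | omega | (exfalso; omega)

lemma ringB_eq (hn : 3 ≤ n) (k j : Fin n) (e : ℕ) (he : e ≤ n)
    (hd : Nat.dist k.val j.val = e ∨ Nat.dist k.val j.val = n - e) :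
    ringB n φ k j = ((rR φ)^e + (rR φ)^(n-e)) / (2 * sR φ * (1 - (rR φ)^n)) := by
  rcases hd with hd | hd
  · simp only [ringB, Matrix.of_apply, hd]
  · simp only [ringB, Matrix.of_apply, hd]
    rw [show n - (n - e) = e by omega, add_comm]

set_option maxHeartbeats 2000000 in
lemma mulAB (hφ : |φ| < 1) (hn : 3 ≤ n) : ringA n φ * ringB n φ = 1 := by
  haveI : NeZero n := ⟨by omega⟩
  have hs := sR_pos hφ
  have hrn := one_sub_rR_pow_pos hφ (show 1 ≤ n by omega)
  set r := rR φ with hrdef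
  set s := sR φ with hsdef
  set D : ℝ := 2 * s * (1 - r^n) with hDdef
  have hD : D ≠ 0 := by positivity
  ext i j
  rw [Matrix.mul_apply]
  have hsum : ∀ k, ringA n φ i k * ringB n φ k j =
      (if k = i then ringB n φ k j * 2 else 0) +
      ((if k = i + 1 then ringB n φ k j * (-φ) else 0) +
       (if k = i - 1 then ringB n φ k j * (-φ) else 0)) := by
    intro k
    rw [entryA hn i k]
    split_ifs <;> ring
  rw [Finset.sum_congr rfl (fun k _ => hsum k)]
  rw [Finset.sum_add_distrib, Finset.sum_add_distrib,
    Finset.sum_ite_eq' Finset.univ i, Finset.sum_ite_eq' Finset.univ (i+1),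
    Finset.sum_ite_eq' Finset.univ (i-1)]
  simp only [Finset.mem_univ, if_true]
  have ha := i.isLt
  have hb := j.isLt
  have ha' := succ_val hn i
  have ha'' := pred_val hn i
  by_cases hij : i = j
  · -- diagonal case
    subst hij
    have hB0 : ringB n φ i i = (1 + r^n) / D := by
      simp only [ringB, Matrix.of_apply, Nat.dist_self, pow_zero, Nat.sub_zero, ← hrdef,
        ← hsdef, ← hDdef]
    have hB1 : ringB n φ (i+1) i = (r^1 + r^(n-1)) / D := by
      rw [ringB_eq hn _ _ 1 (by omega)]
      simp only [Nat.dist] at ha' ⊢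
      split_ifs at ha' <;> omega
    have hB2 : ringB n φ (i-1) i = (r^1 + r^(n-1)) / D := by
      rw [ringB_eq hn _ _ 1 (by omega)]
      simp only [Nat.dist] at ha'' ⊢
      split_ifs at ha'' <;> omega
    rw [hB0, hB1, hB2, Matrix.one_apply_eq]
    have hkey := keyid0 hφ (n := n) (by omega)
    rw [← hrdef, ← hsdef, ← hDdef] at hkey
    have hnum : (1 + r^n) / D * 2 + ((r^1 + r^(n-1)) / D * (-φ) + (r^1 + r^(n-1)) / D * (-φ))
        = (2 * (1 + r^n) - φ * ((r^1 + r^(n-1)) + (r^1 + r^(n-1)))) / D := by ring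
    rw [hnum, hkey, div_self hD]
  · -- off-diagonal case
    have hab : i.val ≠ j.val := fun h => hij (Fin.ext h)
    set d : ℕ := Nat.dist i.val j.val with hd
    have hd1 : 1 ≤ d := by simp only [hd, Nat.dist]; omega
    have hd2 : d ≤ n - 1 := by simp only [hd, Nat.dist]; omega
    have hB0 : ringB n φ i j = (r^d + r^(n-d)) / D := by
      simp only [ringB, Matrix.of_apply, ← hd, ← hrdef, ← hsdef, ← hDdef]
    have hcase :
        ((Nat.dist (i+1).val j.val = d - 1 ∨ Nat.dist (i+1).val j.val = n - (d-1)) ∧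
         (Nat.dist (i-1).val j.val = d + 1 ∨ Nat.dist (i-1).val j.val = n - (d+1))) ∨
        ((Nat.dist (i+1).val j.val = d + 1 ∨ Nat.dist (i+1).val j.val = n - (d+1)) ∧
         (Nat.dist (i-1).val j.val = d - 1 ∨ Nat.dist (i-1).val j.val = n - (d-1))) := by
      simp only [Nat.dist] at ha' ha'' hd ⊢
      rcases lt_or_gt_of_ne hab with h | h
      · refine Or.inl ⟨?_, ?_⟩ <;> split_ifs at ha' ha'' <;> omega
      · refine Or.inr ⟨?_, ?_⟩ <;> split_ifs at ha' ha'' <;> omega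
    have hkey := keyid hφ (n := n) (d := d) (by omega) hd1 hd2
    rw [← hrdef] at hkey
    have goal0 : (1 : Matrix (Fin n) (Fin n) ℝ) i j = 0 := Matrix.one_apply_ne hij
    rcases hcase with ⟨h1, h2⟩ | ⟨h1, h2⟩
    · rw [hB0, ringB_eq hn _ _ (d-1) (by omega) h1, ringB_eq hn _ _ (d+1) (by omega) h2,
        ← hrdef, ← hsdef, ← hDdef, goal0]
      linear_combination (1/D) * hkey
    · rw [hB0, ringB_eq hn _ _ (d+1) (by omega) h1, ringB_eq hn _ _ (d-1) (by omega) h2,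
        ← hrdef, ← hsdef, ← hDdef, goal0]
      linear_combination (1/D) * hkey

set_option maxHeartbeats 1000000 in
lemma ringA_inv (hφ : |φ| < 1) (hn : 3 ≤ n) : (ringA n φ)⁻¹ = ringB n φ := by
  haveI : NeZero n := ⟨by omega⟩
  exact Matrix.inv_eq_right_inv (mulAB hφ hn)
/-- Limiting entrywise formula for the marginal precision matrix
`M_n = τ_Z • (A_n(φ_Z) - 4ρ² • A_n(φ_U)⁻¹)` of the exposure on the ring graph. -/
theorem limiting_marginal_precision_entries
    (φU φZ ρ τZ : ℝ) (hτZ : 0 < τZ) (hφU : |φU| < 1) (hφZ : |φZ| < 1) (i j : ℕ) :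
    Tendsto
      (fun n : ℕ =>
        if h : i < n ∧ j < n then
          (τZ • (ringA n φZ - (4 * ρ ^ 2) • (ringA n φU)⁻¹)) ⟨i, h.1⟩ ⟨j, h.2⟩
        else 0)
      atTop
      (𝓝 (if i = j then
            τZ * (2 - 2 * ρ ^ 2 / Real.sqrt (1 - φU ^ 2))
          else if Nat.dist i j = 1 then
            τZ * (-φZ - 2 * ρ ^ 2 * φU /
              (Real.sqrt (1 - φU ^ 2) * (1 + Real.sqrt (1 - φU ^ 2))))
          else
            τZ * (0 - 2 * ρ ^ 2 * φU ^ Nat.dist i j /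
              (Real.sqrt (1 - φU ^ 2) * (1 + Real.sqrt (1 - φU ^ 2)) ^ Nat.dist i j)))) := by
  have hs := sR_pos hφU
  have h1s := one_add_sR_pos hφU
  have habsr := rR_abs_lt hφU
  set s := sR φU with hsdef
  set r := rR φU with hrdef
  set d := Nat.dist i j with hddef
  set c1 : ℝ := if i = j then 2 else if d = 1 then -φZ else 0 with hc1
  have hsqrt : Real.sqrt (1 - φU ^ 2) = s := rfl
  -- the limit of the explicit formula
  have hpow : Tendsto (fun n : ℕ => r ^ n) atTop (𝓝 0) :=
    tendsto_pow_atTop_nhds_zero_of_abs_lt_one habsr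
  have hpow2 : Tendsto (fun n : ℕ => r ^ (n - d)) atTop (𝓝 0) :=
    hpow.comp (tendsto_sub_atTop_nat d)
  have hden : (2 * s * (1 - 0) : ℝ) ≠ 0 := by
    rw [sub_zero]; positivity
  have hlim : Tendsto
      (fun n : ℕ => τZ * (c1 - (4 * ρ ^ 2) * ((r ^ d + r ^ (n - d)) / (2 * s * (1 - r ^ n)))))
      atTop
      (𝓝 (τZ * (c1 - (4 * ρ ^ 2) * ((r ^ d + 0) / (2 * s * (1 - 0)))))) := by
    apply Tendsto.const_mul
    apply Tendsto.const_sub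
    apply Tendsto.const_mul
    exact (tendsto_const_nhds.add hpow2).div
      ((tendsto_const_nhds.sub hpow).const_mul (2 * s)) hden
  -- the limit value matches the stated one
  have hval : (if i = j then
            τZ * (2 - 2 * ρ ^ 2 / Real.sqrt (1 - φU ^ 2))
          else if Nat.dist i j = 1 then
            τZ * (-φZ - 2 * ρ ^ 2 * φU /
              (Real.sqrt (1 - φU ^ 2) * (1 + Real.sqrt (1 - φU ^ 2))))
          else
            τZ * (0 - 2 * ρ ^ 2 * φU ^ Nat.dist i j /
              (Real.sqrt (1 - φU ^ 2) * (1 + Real.sqrt (1 - φU ^ 2)) ^ Nat.dist i j)))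
      = τZ * (c1 - (4 * ρ ^ 2) * ((r ^ d + 0) / (2 * s * (1 - 0)))) := by
    rw [hsqrt]
    have hrpow : r ^ d = φU ^ d / (1 + s) ^ d := by
      rw [hrdef]; unfold rR; rw [div_pow, ← hsdef]
    by_cases hij : i = j
    · have hd0 : d = 0 := by rw [hddef, hij, Nat.dist_self]
      rw [if_pos hij, hc1, if_pos hij, hd0, pow_zero]
      field_simp
      ring
    · rw [if_neg hij, hc1, if_neg hij]
      by_cases hd1 : d = 1
      · rw [← hddef, if_pos hd1, if_pos hd1, hrpow, hd1, pow_one, pow_one]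
        have h1sd : (1 + s) ≠ 0 := by positivity
        field_simp
        ring
      · rw [← hddef, if_neg hd1, if_neg hd1, hrpow]
        have h1sd : (1 + s) ^ d ≠ 0 := by positivity
        field_simp
        ring
  rw [hval]
  -- eventual equality of the two sequences
  apply Tendsto.congr' _ hlim
  have hdij : d ≤ i + j := by
    rw [hddef]; simp only [Nat.dist]; omega
  filter_upwards [eventually_ge_atTop (i + j + 3)] with n hn
  have hi : i < n := by omega
  have hj : j < n := by omega
  have h3 : 3 ≤ n := by omega
  have hdn : d < n - 1 := by omega
  rw [dif_pos ⟨hi, hj⟩]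
  have hAZ : ringA n φZ ⟨i, hi⟩ ⟨j, hj⟩ = c1 := by
    simp only [ringA, Matrix.of_apply, Fin.mk.injEq, ← hddef]
    rw [hc1]
    by_cases hij : i = j
    · rw [if_pos hij, if_pos hij]
    · rw [if_neg hij, if_neg hij]
      by_cases hd1 : d = 1
      · rw [if_pos (Or.inl hd1), if_pos hd1]
      · rw [if_neg _, if_neg hd1]
        rintro (h | h)
        · exact hd1 h
        · omega
  have hBU : (ringA n φU)⁻¹ ⟨i, hi⟩ ⟨j, hj⟩
      = (r ^ d + r ^ (n - d)) / (2 * s * (1 - r ^ n)) := by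
    rw [ringA_inv hφU h3]
    simp only [ringB, Matrix.of_apply, ← hddef, ← hrdef, ← hsdef]
  simp only [Matrix.smul_apply, Matrix.sub_apply, smul_eq_mul, hAZ, hBU]
end matrixpart
end

section
/- Let τ_U > 0, τ_ε > 0, and φ_U ∈ (−1,1), and for each n ≥ 3 let V_n = τ_U⁻¹·A_n(φ_U)⁻¹ + τ_ε⁻¹·I_n. Then for every fixed pair of natural-number indices i, j, the sequence n ↦ (V_n)_{ij} (defined for all n > max(i,j)) converges, as n → ∞, to τ_U⁻¹·(1/(2√(1−φ_U²)))·(φ_U/(1+√(1−φ_U²)))^{|i−j|} when i ≠ j, and to τ_U⁻¹/(2√(1−φ_U²)) + τ_ε⁻¹ when i = j. -/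
open Matrix Filter Topology

set_option maxHeartbeats 1000000 in
lemma ring_mul_B (m : ℕ) (φ s r : ℝ) (hφ : |φ| < 1) (hs : s = Real.sqrt (1 - φ^2))
    (hr : r = φ / (1+s)) :
    ringA (m+3) φ *
      (Matrix.of fun i j : Fin (m+3) =>
        (r^(Nat.dist i.val j.val) + r^((m+3) - Nat.dist i.val j.val)) /
          (2*s*(1-r^(m+3)))) = 1 := by
  have hφ2 : φ^2 < 1 := by nlinarith [abs_nonneg φ, sq_abs φ]
  have hs0 : 0 < s := hs ▸ Real.sqrt_pos.mpr (by nlinarith)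
  have hs1 : s^2 = 1 - φ^2 := by rw [hs]; exact Real.sq_sqrt (by nlinarith)
  have h1s : (0:ℝ) < 1 + s := by linarith
  have hrφ : r * (1+s) = φ := by rw [hr]; field_simp
  have hφr : φ * r = 1 - s := by
    have h' : (φ * r) * (1+s) = (1-s) * (1+s) := by
      rw [hr]; field_simp; linear_combination hs1
    exact mul_right_cancel₀ (ne_of_gt h1s) h'
  have hrec : φ * (1 + r^2) = 2*r := by linear_combination r * hφr - hrφ
  have habsr : |r| < 1 := by
    rw [hr, abs_div, abs_of_pos h1s, div_lt_one h1s]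
    have := abs_nonneg φ; linarith
  have hdenpos : 0 < 1 - r^(m+3) := by
    have h1 : |r|^(m+3) < 1 := pow_lt_one₀ (abs_nonneg r) habsr (by omega)
    have h2 : r^(m+3) ≤ |r^(m+3)| := le_abs_self _
    rw [abs_pow] at h2; linarith
  have hD : (2*s*(1-r^(m+3))) ≠ 0 := by positivity
  have step : ∀ d : ℕ, 1 ≤ d → φ * (r^(d-1) + r^(d+1)) = 2 * r^d := by
    intro d hd
    obtain ⟨k, rfl⟩ : ∃ k, d = k + 1 := ⟨d-1, by omega⟩
    simp only [Nat.add_sub_cancel]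
    linear_combination r^k * hrec
  set n := m + 3 with hn
  set bf : ℕ → ℝ := fun e => (r^e + r^(n-e)) / (2*s*(1-r^n)) with hbf
  have hsym : ∀ e, e ≤ n → bf e = bf (n - e) := by
    intro e he; simp only [hbf]; rw [Nat.sub_sub_self he]; ring
  have hS1 : 2 * bf 0 - 2*φ*bf 1 = 1 := by
    simp only [hbf]
    have e0 : n - 0 = n := by omega
    have hpow : r^n = r^(n-1) * r := by rw [← pow_succ, show n - 1 + 1 = n from by omega]
    have hnum1 : 2*(r^0 + r^n) - 2*φ*(r^1 + r^(n-1)) = 2*s*(1-r^n) := by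
      linear_combination (-2)*hφr + 2*r^(n-1)*hrφ + (2+2*s)*hpow
    rw [e0]
    calc 2 * ((r^0 + r^n)/(2*s*(1-r^n))) - 2*φ*((r^1+r^(n-1))/(2*s*(1-r^n)))
        = (2*(r^0 + r^n) - 2*φ*(r^1 + r^(n-1)))/(2*s*(1-r^n)) := by ring
      _ = (2*s*(1-r^n))/(2*s*(1-r^n)) := by rw [hnum1]
      _ = 1 := div_self hD
  have hS2 : ∀ d : ℕ, 1 ≤ d → d + 1 ≤ n → 2 * bf d - φ * bf (d-1) - φ * bf (d+1) = 0 := by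
    intro d hd hdn
    have e1 : n - (d-1) = (n-d)+1 := by omega
    have e2 : n - (d+1) = (n-d)-1 := by omega
    have hst1 := step d hd
    have hst2 := step (n-d) (by omega)
    have hnum : 2*(r^d + r^(n-d)) - φ*(r^(d-1) + r^((n-d)+1)) - φ*(r^(d+1) + r^((n-d)-1)) = 0 := by
      linear_combination -hst1 - hst2
    simp only [hbf, e1, e2]
    calc 2 * ((r^d + r^(n-d))/(2*s*(1-r^n))) - φ*((r^(d-1) + r^((n-d)+1))/(2*s*(1-r^n)))
          - φ*((r^(d+1) + r^((n-d)-1))/(2*s*(1-r^n)))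
        = (2*(r^d + r^(n-d)) - φ*(r^(d-1) + r^((n-d)+1)) - φ*(r^(d+1) + r^((n-d)-1)))/(2*s*(1-r^n)) := by ring
      _ = 0 := by rw [hnum]; simp
  have hKey : ∀ d d1 d2 : ℕ, d ≤ n - 1 →
      ((d = 0 ∧ (d1 = 1 ∨ d1 = n-1) ∧ (d2 = 1 ∨ d2 = n-1)) ∨
       (1 ≤ d ∧ (d1 = d+1 ∨ d1 = n-(d+1)) ∧ (d2 = d-1 ∨ d2 = n-(d-1))) ∨
       (1 ≤ d ∧ (d2 = d+1 ∨ d2 = n-(d+1)) ∧ (d1 = d-1 ∨ d1 = n-(d-1)))) →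
      2*bf d - φ*bf d1 - φ*bf d2 = if d = 0 then 1 else 0 := by
    intro d d1 d2 hdn hcase
    rcases hcase with ⟨rfl, h1, h2⟩ | ⟨hd, h1, h2⟩ | ⟨hd, h1, h2⟩
    · have hb1 : bf d1 = bf 1 := by
        rcases h1 with rfl | rfl
        · rfl
        · rw [← hsym 1 (by omega)]
      have hb2 : bf d2 = bf 1 := by
        rcases h2 with rfl | rfl
        · rfl
        · rw [← hsym 1 (by omega)]
      rw [hb1, hb2, if_pos rfl]
      linear_combination hS1
    · have hb1 : bf d1 = bf (d+1) := by
        rcases h1 with rfl | rfl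
        · rfl
        · rw [← hsym (d+1) (by omega)]
      have hb2 : bf d2 = bf (d-1) := by
        rcases h2 with rfl | rfl
        · rfl
        · rw [← hsym (d-1) (by omega)]
      rw [hb1, hb2, if_neg (by omega)]
      linear_combination hS2 d hd (by omega)
    · have hb1 : bf d2 = bf (d+1) := by
        rcases h1 with rfl | rfl
        · rfl
        · rw [← hsym (d+1) (by omega)]
      have hb2 : bf d1 = bf (d-1) := by
        rcases h2 with rfl | rfl
        · rfl
        · rw [← hsym (d-1) (by omega)]
      rw [hb1, hb2, if_neg (by omega)]
      linear_combination hS2 d hd (by omega)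
  have arith : ∀ a b p1 p2 : ℕ, a < m+3 → b < m+3 →
        ((a ≤ m+1 ∧ p1 = a+1) ∨ (a = m+2 ∧ p1 = 0)) → ((1 ≤ a ∧ p2 = a-1) ∨ (a = 0 ∧ p2 = m+2)) →
        ((Nat.dist a b = 0 ∧ (Nat.dist p1 b = 1 ∨ Nat.dist p1 b = n-1) ∧
            (Nat.dist p2 b = 1 ∨ Nat.dist p2 b = n-1)) ∨
         (1 ≤ Nat.dist a b ∧ (Nat.dist p1 b = Nat.dist a b + 1 ∨ Nat.dist p1 b = n-(Nat.dist a b + 1)) ∧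
            (Nat.dist p2 b = Nat.dist a b - 1 ∨ Nat.dist p2 b = n-(Nat.dist a b - 1))) ∨
         (1 ≤ Nat.dist a b ∧ (Nat.dist p2 b = Nat.dist a b + 1 ∨ Nat.dist p2 b = n-(Nat.dist a b + 1)) ∧
            (Nat.dist p1 b = Nat.dist a b - 1 ∨ Nat.dist p1 b = n-(Nat.dist a b - 1)))) := by
      intro a b p1 p2 ha hb h1 h2
      simp only [Nat.dist, hn]
      rcases h1 with ⟨ha1, rfl⟩ | ⟨ha1, rfl⟩ <;> rcases h2 with ⟨ha2, rfl⟩ | ⟨ha2, rfl⟩ <;>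
        rcases Nat.lt_trichotomy a b with hab | hab | hab <;> omega
  ext i j
  have hi := i.isLt
  have hj := j.isLt
  have hv1 : ((i+1 : Fin (m+3)) : ℕ) = if i.val = m+2 then 0 else i.val + 1 := by
    rw [Fin.val_add_one i]
    congr 1
    · simp [Fin.ext_iff, Fin.val_last]
  have hv2 : ((i - 1 : Fin (m+3)) : ℕ) = if i.val = 0 then m+2 else i.val - 1 := by
    rw [Fin.coe_sub_one i]
    congr 1
    · rw [Fin.ext_iff, Fin.val_zero]
  have d1 : (i+1 : Fin (m+3)) ≠ i := by
    intro h; have := congrArg Fin.val h; rw [hv1] at this; split_ifs at this <;> omega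
  have d2 : (i-1 : Fin (m+3)) ≠ i := by
    intro h; have := congrArg Fin.val h; rw [hv2] at this; split_ifs at this <;> omega
  have d3 : (i+1 : Fin (m+3)) ≠ i - 1 := by
    intro h; have := congrArg Fin.val h; rw [hv1, hv2] at this; split_ifs at this <;> omega
  have hA : ∀ k : Fin (m+3), ringA (m+3) φ i k =
      if k = i then 2 else if k = i+1 ∨ k = i-1 then -φ else 0 := by
    intro k
    have hk := k.isLt
    simp only [ringA, Matrix.of_apply]
    refine if_congr eq_comm rfl (if_congr ?_ rfl rfl)
    rw [Fin.ext_iff, Fin.ext_iff, hv1, hv2]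
    simp only [Nat.dist]
    split_ifs <;> omega
  have hBapp : ∀ (k l : Fin (m+3)),
      (Matrix.of (fun i j : Fin (m+3) =>
        (r^(Nat.dist i.val j.val) + r^((m+3) - Nat.dist i.val j.val)) /
          (2*s*(1-r^(m+3)))) : Matrix (Fin (m+3)) (Fin (m+3)) ℝ) k l
        = bf (Nat.dist k.val l.val) := fun k l => rfl
  rw [Matrix.mul_apply]
  have hpt : ∀ k : Fin (m+3), ringA (m+3) φ i k *
      (Matrix.of (fun i j : Fin (m+3) =>
        (r^(Nat.dist i.val j.val) + r^((m+3) - Nat.dist i.val j.val)) /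
          (2*s*(1-r^(m+3)))) : Matrix (Fin (m+3)) (Fin (m+3)) ℝ) k j =
      (if k = i then 2 * bf (Nat.dist i.val j.val) else 0) +
      (if k = i+1 then -φ * bf (Nat.dist ((i+1 : Fin (m+3)) : ℕ) j.val) else 0) +
      (if k = i-1 then -φ * bf (Nat.dist ((i-1 : Fin (m+3)) : ℕ) j.val) else 0) := by
    intro k
    rw [hA k, hBapp]
    by_cases h0 : k = i
    · subst h0
      rw [if_pos rfl, if_pos rfl, if_neg (fun h => d1 h.symm), if_neg (fun h => d2 h.symm)]
      ring
    · rw [if_neg h0, if_neg h0]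
      by_cases h1 : k = i + 1
      · subst h1
        rw [if_pos (Or.inl rfl), if_pos rfl, if_neg d3]
        ring
      · rw [if_neg h1]
        by_cases h2 : k = i - 1
        · subst h2
          rw [if_pos (Or.inr rfl), if_pos rfl]
          ring
        · rw [if_neg (by tauto), if_neg h2]
          ring
  rw [Finset.sum_congr rfl (fun k _ => hpt k)]
  rw [Finset.sum_add_distrib, Finset.sum_add_distrib, Finset.sum_ite_eq',
    Finset.sum_ite_eq', Finset.sum_ite_eq']
  simp only [Finset.mem_univ, if_true]
  rw [Matrix.one_apply]
  have hij : (i = j) ↔ (Nat.dist i.val j.val = 0) := by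
    rw [Fin.ext_iff]
    simp only [Nat.dist]
    omega
  rw [if_congr hij rfl rfl]
  have goal' : 2 * bf (Nat.dist i.val j.val)
      - φ * bf (Nat.dist ((i+1 : Fin (m+3)) : ℕ) j.val)
      - φ * bf (Nat.dist ((i-1 : Fin (m+3)) : ℕ) j.val)
      = if Nat.dist i.val j.val = 0 then 1 else 0 := by
    apply hKey
    · simp only [Nat.dist]; omega
    · have c1 : (i.val ≤ m+1 ∧ (((i+1) : Fin (m+3)) : ℕ) = i.val + 1) ∨
          (i.val = m+2 ∧ (((i+1) : Fin (m+3)) : ℕ) = 0) := by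
        rw [hv1]; split_ifs with h
        · exact Or.inr ⟨h, rfl⟩
        · exact Or.inl ⟨by omega, rfl⟩
      have c2 : (1 ≤ i.val ∧ (((i-1) : Fin (m+3)) : ℕ) = i.val - 1) ∨
          (i.val = 0 ∧ (((i-1) : Fin (m+3)) : ℕ) = m+2) := by
        rw [hv2]; split_ifs with h
        · exact Or.inr ⟨h, rfl⟩
        · exact Or.inl ⟨by omega, rfl⟩
      exact arith i.val j.val _ _ hi hj c1 c2
  linear_combination goal'

/-- Limiting entrywise formula for the conditional covariance
`V_n = τ_U⁻¹ • A_n(φ_U)⁻¹ + τ_ε⁻¹ • I_n` on the ring graph (used in Theorem 2). -/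
theorem limiting_conditional_covariance_entries
    (τU τε φU : ℝ) (hτU : 0 < τU) (hτε : 0 < τε)
    (hφU : φU ∈ Set.Ioo (-1 : ℝ) 1) (i j : ℕ) :
    Tendsto
      (fun n : ℕ =>
        if h : i < n ∧ j < n then
          (τU⁻¹ • (ringA n φU)⁻¹ + τε⁻¹ • (1 : Matrix (Fin n) (Fin n) ℝ)) ⟨i, h.1⟩ ⟨j, h.2⟩
        else 0)
      atTop
      (𝓝 (if i = j then
            τU⁻¹ / (2 * Real.sqrt (1 - φU ^ 2)) + τε⁻¹
          else
            τU⁻¹ * (1 / (2 * Real.sqrt (1 - φU ^ 2))) *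
              (φU / (1 + Real.sqrt (1 - φU ^ 2))) ^ Nat.dist i j)) := by
  obtain ⟨hl, hu⟩ := hφU
  have hφ : |φU| < 1 := abs_lt.mpr ⟨hl, hu⟩
  set s := Real.sqrt (1 - φU^2) with hs
  set r := φU / (1 + s) with hr
  set D := Nat.dist i j with hD
  have hφ2 : φU^2 < 1 := by nlinarith [abs_nonneg φU, sq_abs φU]
  have hs0 : 0 < s := hs ▸ Real.sqrt_pos.mpr (by nlinarith)
  have h1s : (0:ℝ) < 1 + s := by linarith
  have habsr : |r| < 1 := by
    rw [hr, abs_div, abs_of_pos h1s, div_lt_one h1s]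
    have := abs_nonneg φU; linarith
  have hpow : Tendsto (fun n : ℕ => r ^ n) atTop (𝓝 0) :=
    tendsto_pow_atTop_nhds_zero_of_abs_lt_one habsr
  have hpow2 : Tendsto (fun n : ℕ => r ^ (n - D)) atTop (𝓝 0) :=
    hpow.comp (tendsto_sub_atTop_nat D)
  have hnum : Tendsto (fun n : ℕ => r^D + r^(n-D)) atTop (𝓝 (r^D + 0)) :=
    tendsto_const_nhds.add hpow2
  have hden : Tendsto (fun n : ℕ => 2*s*(1-r^n)) atTop (𝓝 (2*s*(1-0))) :=
    (tendsto_const_nhds.sub hpow).const_mul (2*s)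
  have hden0 : (2*s*(1-(0:ℝ))) ≠ 0 := by
    have : (0:ℝ) < 2*s*(1-0) := by nlinarith
    exact ne_of_gt this
  have hg : Tendsto (fun n : ℕ =>
      τU⁻¹ * ((r^D + r^(n-D))/(2*s*(1-r^n))) + (if i = j then τε⁻¹ else 0)) atTop
      (𝓝 (τU⁻¹ * ((r^D + 0)/(2*s*(1-0))) + (if i = j then τε⁻¹ else 0))) :=
    ((hnum.div hden hden0).const_mul τU⁻¹).add_const _
  have hLeq : (if i = j then
            τU⁻¹ / (2 * s) + τε⁻¹
          else τU⁻¹ * (1 / (2 * s)) * r ^ D)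
      = τU⁻¹ * ((r^D + 0)/(2*s*(1-0))) + (if i = j then τε⁻¹ else 0) := by
    by_cases hij : i = j
    · have hD0 : D = 0 := by rw [hD, hij]; exact Nat.dist_self j
      rw [if_pos hij, if_pos hij, hD0, pow_zero]
      field_simp
      ring
    · rw [if_neg hij, if_neg hij]
      ring
  rw [hLeq]
  refine hg.congr' ?_
  filter_upwards [Filter.eventually_ge_atTop (max (max i j + 1) 3)] with n hn
  have h : i < n ∧ j < n := ⟨by omega, by omega⟩
  rw [dif_pos h]
  obtain ⟨m, rfl⟩ : ∃ m, n = m+3 := ⟨n-3, by omega⟩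
  have hinv : (ringA (m+3) φU)⁻¹ = Matrix.of (fun a b : Fin (m+3) =>
      (r^(Nat.dist a.val b.val) + r^((m+3) - Nat.dist a.val b.val)) /
        (2*s*(1-r^(m+3)))) :=
    Matrix.inv_eq_right_inv (ring_mul_B m φU s r hφ hs hr)
  simp only [Matrix.add_apply, Matrix.smul_apply, smul_eq_mul, hinv, Matrix.of_apply,
    Matrix.one_apply, Fin.mk.injEq]
  rw [← hD]
  by_cases hij : i = j <;> simp [hij]
end

section
/- Let φ be a real number and n ≥ 3 an integer. Then det[A_n(φ)] = 2·det[S_{n−1}(2, −φ)] − 2φ²·(det[S_{n−2}(2, −φ)] + φ^{n−2}). -/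
open Matrix

/-- The `n × n` symmetric tridiagonal matrix with constant diagonal `a` and constant
sub- and superdiagonal `b`; `S_0(a,b)` is the empty matrix (with determinant `1`). -/
noncomputable def tridiagS (n : ℕ) (a b : ℝ) : Matrix (Fin n) (Fin n) ℝ :=
  Matrix.of fun i j =>
    if i = j then a
    else if Nat.dist i.val j.val = 1 then b
    else 0

private lemma fin_val_succAbove {n : ℕ} (p : Fin (n+1)) (i : Fin n) :
    ((p.succAbove i : Fin (n+1)) : ℕ) = if (i : ℕ) < (p : ℕ) then (i : ℕ) else (i : ℕ) + 1 := by
  rcases Fin.lt_or_le (Fin.castSucc i) p with h | h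
  · rw [Fin.succAbove_of_castSucc_lt _ _ h]
    simp [Fin.lt_def] at h
    rw [if_pos h]; simp
  · rw [Fin.succAbove_of_le_castSucc _ _ h]
    simp [Fin.le_def] at h
    rw [if_neg (by omega)]; simp

private lemma tridiagS_apply {n : ℕ} (a b : ℝ) (i j : Fin n) :
    tridiagS n a b i j
      = if (i : ℕ) = (j : ℕ) then a else if Nat.dist (i : ℕ) (j : ℕ) = 1 then b else 0 := by
  simp [tridiagS, Fin.ext_iff]

private lemma dist_eq_one {i j : ℕ} : Nat.dist i j = 1 ↔ (i = j + 1 ∨ j = i + 1) := by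
  simp [Nat.dist]; omega

private lemma det_row_single {k : ℕ} (M : Matrix (Fin (k+1)) (Fin (k+1)) ℝ) (i j : Fin (k+1))
    (c : ℝ) (h : ∀ j', M i j' = if j' = j then c else 0) :
    M.det = (-1)^((i:ℕ)+(j:ℕ)) * c * (M.submatrix i.succAbove j.succAbove).det := by
  rw [Matrix.det_succ_row M i, Finset.sum_eq_single j]
  · rw [h j, if_pos rfl]
  · intro b _ hb; rw [h b, if_neg hb, mul_zero, zero_mul]
  · intro h'; exact absurd (Finset.mem_univ _) h'

private lemma det_col_single {k : ℕ} (M : Matrix (Fin (k+1)) (Fin (k+1)) ℝ) (i j : Fin (k+1))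
    (c : ℝ) (h : ∀ i', M i' j = if i' = i then c else 0) :
    M.det = (-1)^((i:ℕ)+(j:ℕ)) * c * (M.submatrix i.succAbove j.succAbove).det := by
  rw [Matrix.det_succ_column M j, Finset.sum_eq_single i]
  · rw [h i, if_pos rfl]
  · intro b _ hb; rw [h b, if_neg hb, mul_zero, zero_mul]
  · intro h'; exact absurd (Finset.mem_univ _) h'

private lemma det_lowerTri {k : ℕ} (b : ℝ) (M : Matrix (Fin k) (Fin k) ℝ)
    (h : ∀ i j : Fin k, (i : ℕ) < (j : ℕ) → M i j = 0) (hd : ∀ i, M i i = b) :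
    M.det = b ^ k := by
  rw [Matrix.det_of_lowerTriangular M (fun i j hij => h i j hij)]
  simp [hd]

private lemma det_upperTri {k : ℕ} (b : ℝ) (M : Matrix (Fin k) (Fin k) ℝ)
    (h : ∀ i j : Fin k, (j : ℕ) < (i : ℕ) → M i j = 0) (hd : ∀ i, M i i = b) :
    M.det = b ^ k := by
  rw [Matrix.det_of_upperTriangular (fun i j hij => h i j hij)]
  simp [hd]

private lemma updateRow_comm' {k : ℕ} (M : Matrix (Fin k) (Fin k) ℝ) {i i' : Fin k}
    (h : i ≠ i') (r r' : Fin k → ℝ) :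
    (M.updateRow i r).updateRow i' r' = (M.updateRow i' r').updateRow i r := by
  ext x y
  rcases eq_or_ne x i' with rfl | h1
  · rw [Matrix.updateRow_self, Matrix.updateRow_ne (Ne.symm h), Matrix.updateRow_self]
  · rw [Matrix.updateRow_ne h1]
    rcases eq_or_ne x i with rfl | h2
    · rw [Matrix.updateRow_self, Matrix.updateRow_self]
    · rw [Matrix.updateRow_ne h2, Matrix.updateRow_ne h2, Matrix.updateRow_ne h1]

private lemma tridiag_rec (k : ℕ) (a b : ℝ) :
    (tridiagS (k+2) a b).det
      = a * (tridiagS (k+1) a b).det - b^2 * (tridiagS k a b).det := by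
  have hrow : tridiagS (k+2) a b (Fin.last (k+1))
      = a • (Pi.single (Fin.last (k+1)) 1 : Fin (k+2) → ℝ)
        + b • (Pi.single (Fin.castSucc (Fin.last k)) 1 : Fin (k+2) → ℝ) := by
    funext j
    have hj := j.isLt
    simp only [Pi.add_apply, Pi.smul_apply, Pi.single_apply, smul_eq_mul, tridiagS_apply,
      Fin.ext_iff, Fin.val_last, Fin.coe_castSucc, dist_eq_one, mul_ite, mul_one, mul_zero]
    split_ifs <;> first | ring1 | (exfalso; omega)
  have h1 : ((tridiagS (k+2) a b).updateRow (Fin.last (k+1)) (Pi.single (Fin.last (k+1)) 1)).det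
      = (tridiagS (k+1) a b).det := by
    rw [det_row_single _ (Fin.last (k+1)) (Fin.last (k+1)) 1
      (by intro j'; rw [Matrix.updateRow_self, Pi.single_apply])]
    have hM : (((tridiagS (k+2) a b).updateRow (Fin.last (k+1))
        (Pi.single (Fin.last (k+1)) 1)).submatrix
          (Fin.last (k+1)).succAbove (Fin.last (k+1)).succAbove) = tridiagS (k+1) a b := by
      ext i j
      rw [Matrix.submatrix_apply, Matrix.updateRow_ne (Fin.succAbove_ne _ i)]
      have hi := i.isLt; have hj := j.isLt
      simp only [tridiagS_apply, fin_val_succAbove, Fin.val_last, dist_eq_one]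
      split_ifs <;> first | rfl | (exfalso; omega)
    rw [hM, Fin.val_last]
    have : (-1 : ℝ)^((k+1)+(k+1)) = 1 := Even.neg_one_pow ⟨k+1, by ring⟩
    rw [this, one_mul, one_mul]
  have h2 : ((tridiagS (k+2) a b).updateRow (Fin.last (k+1))
      (Pi.single (Fin.castSucc (Fin.last k)) 1)).det = -(b * (tridiagS k a b).det) := by
    rw [det_row_single _ (Fin.last (k+1)) (Fin.castSucc (Fin.last k)) 1
      (by intro j'; rw [Matrix.updateRow_self, Pi.single_apply])]
    set Q := (((tridiagS (k+2) a b).updateRow (Fin.last (k+1))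
        (Pi.single (Fin.castSucc (Fin.last k)) 1)).submatrix
          (Fin.last (k+1)).succAbove (Fin.castSucc (Fin.last k)).succAbove) with hQ
    have hcol : ∀ i', Q i' (Fin.last k) = if i' = Fin.last k then b else 0 := by
      intro i'
      rw [hQ, Matrix.submatrix_apply, Matrix.updateRow_ne (Fin.succAbove_ne _ i')]
      have hi := i'.isLt
      simp only [tridiagS_apply, fin_val_succAbove, Fin.val_last, Fin.coe_castSucc,
        dist_eq_one, Fin.ext_iff]
      split_ifs <;> first | rfl | (exfalso; omega)
    rw [det_col_single Q (Fin.last k) (Fin.last k) b hcol]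
    have hR : (Q.submatrix (Fin.last k).succAbove (Fin.last k).succAbove) = tridiagS k a b := by
      ext i j
      rw [Matrix.submatrix_apply, hQ, Matrix.submatrix_apply,
        Matrix.updateRow_ne (Fin.succAbove_ne _ _)]
      have hi := i.isLt; have hj := j.isLt
      simp only [tridiagS_apply, fin_val_succAbove, Fin.val_last, Fin.coe_castSucc, dist_eq_one]
      split_ifs <;> first | rfl | (exfalso; omega)
    rw [hR, Fin.val_last, Fin.coe_castSucc, Fin.val_last]
    have hs : (-1 : ℝ)^((k+1)+k) = -((-1)^(k+k)) := by
      have h : (k+1)+k = (k+k)+1 := by ring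
      rw [h, pow_succ]; ring
    have h2 : (-1 : ℝ)^(k+k) = 1 := Even.neg_one_pow ⟨k, rfl⟩
    rw [hs, h2]
    ring
  calc (tridiagS (k+2) a b).det
      = ((tridiagS (k+2) a b).updateRow (Fin.last (k+1))
          (tridiagS (k+2) a b (Fin.last (k+1)))).det := by rw [Matrix.updateRow_eq_self]
    _ = a * (tridiagS (k+1) a b).det - b^2 * (tridiagS k a b).det := by
        rw [hrow, Matrix.det_updateRow_add, Matrix.det_updateRow_smul, Matrix.det_updateRow_smul,
          h1, h2]
        ring

/-- Lemma E.1: recurrence for the determinant of the ring-graph CAR precision matrix. -/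
theorem det_ringA_recurrence (φ : ℝ) (n : ℕ) (hn : 3 ≤ n) :
    (ringA n φ).det =
      2 * (tridiagS (n - 1) 2 (-φ)).det -
        2 * φ ^ 2 * ((tridiagS (n - 2) 2 (-φ)).det + φ ^ (n - 2)) := by
  obtain ⟨m, rfl⟩ : ∃ m, n = m + 3 := ⟨n - 3, by omega⟩
  show (ringA (m+3) φ).det
      = 2 * (tridiagS (m+2) 2 (-φ)).det - 2 * φ ^ 2 * ((tridiagS (m+1) 2 (-φ)).det + φ ^ (m+1))
  set T : Matrix (Fin (m+3)) (Fin (m+3)) ℝ := tridiagS (m+3) 2 (-φ) with hTdef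
  have hL0 : (Fin.last (m+2) : Fin (m+3)) ≠ 0 := by
    intro h; have := congrArg Fin.val h; simp at this
  have h0L : (0 : Fin (m+3)) ≠ Fin.last (m+2) := fun h => hL0 h.symm
  -- decomposition of ringA
  have hA : ringA (m+3) φ
      = (T.updateRow (Fin.last (m+2))
            (T (Fin.last (m+2)) + (-φ) • (Pi.single 0 1 : Fin (m+3) → ℝ))).updateRow 0
          (T 0 + (-φ) • (Pi.single (Fin.last (m+2)) 1 : Fin (m+3) → ℝ)) := by
    ext i j
    have hj := j.isLt
    by_cases hi0 : i = 0
    · subst hi0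
      rw [Matrix.updateRow_self]
      simp only [ringA, Matrix.of_apply, hTdef, tridiagS_apply, Pi.add_apply, Pi.smul_apply,
        Pi.single_apply, smul_eq_mul, Nat.dist, Fin.ext_iff, Fin.val_last, Fin.val_zero]
      grind
    · rw [Matrix.updateRow_ne hi0]
      have hiv0 : (i : ℕ) ≠ 0 := fun h => hi0 (Fin.ext h)
      by_cases hiL : i = Fin.last (m+2)
      · subst hiL
        rw [Matrix.updateRow_self]
        simp only [ringA, Matrix.of_apply, hTdef, tridiagS_apply, Pi.add_apply, Pi.smul_apply,
          Pi.single_apply, smul_eq_mul, Nat.dist, Fin.ext_iff, Fin.val_last, Fin.val_zero]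
        grind
      · rw [Matrix.updateRow_ne hiL]
        have hivL : (i : ℕ) ≠ m + 2 := fun h => hiL (Fin.ext h)
        have hi := i.isLt
        simp only [ringA, Matrix.of_apply, hTdef, tridiagS_apply, Nat.dist, Fin.ext_iff]
        grind
  -- det E
  have hE : (T.updateRow (Fin.last (m+2)) (Pi.single 0 1)).det = φ ^ (m+2) := by
    rw [det_row_single _ (Fin.last (m+2)) 0 1
      (by intro j'; rw [Matrix.updateRow_self, Pi.single_apply])]
    have hM : ((T.updateRow (Fin.last (m+2)) (Pi.single 0 1)).submatrix
        (Fin.last (m+2)).succAbove (0 : Fin (m+3)).succAbove).det = (-φ) ^ (m+2) := by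
      apply det_lowerTri
      · intro i j hij
        rw [Matrix.submatrix_apply, Matrix.updateRow_ne (Fin.succAbove_ne _ i)]
        have hi := i.isLt; have hj := j.isLt
        simp only [hTdef, tridiagS_apply, fin_val_succAbove, Fin.val_last, Fin.val_zero,
          dist_eq_one]
        grind
      · intro i
        rw [Matrix.submatrix_apply, Matrix.updateRow_ne (Fin.succAbove_ne _ i)]
        have hi := i.isLt
        simp only [hTdef, tridiagS_apply, fin_val_succAbove, Fin.val_last, Fin.val_zero,
          dist_eq_one]
        grind
    rw [hM, Fin.val_last, Fin.val_zero, Nat.add_zero, mul_one, ← mul_pow]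
    norm_num
  -- det F1
  have hF1 : (T.updateRow 0 (Pi.single (Fin.last (m+2)) 1)).det = φ ^ (m+2) := by
    rw [det_row_single _ 0 (Fin.last (m+2)) 1
      (by intro j'; rw [Matrix.updateRow_self, Pi.single_apply])]
    have hM : ((T.updateRow 0 (Pi.single (Fin.last (m+2)) 1)).submatrix
        (0 : Fin (m+3)).succAbove (Fin.last (m+2)).succAbove).det = (-φ) ^ (m+2) := by
      apply det_upperTri
      · intro i j hij
        rw [Matrix.submatrix_apply, Matrix.updateRow_ne (Fin.succAbove_ne _ i)]
        have hi := i.isLt; have hj := j.isLt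
        simp only [hTdef, tridiagS_apply, fin_val_succAbove, Fin.val_last, Fin.val_zero,
          dist_eq_one]
        grind
      · intro i
        rw [Matrix.submatrix_apply, Matrix.updateRow_ne (Fin.succAbove_ne _ i)]
        have hi := i.isLt
        simp only [hTdef, tridiagS_apply, fin_val_succAbove, Fin.val_last, Fin.val_zero,
          dist_eq_one]
        grind
    rw [hM, Fin.val_last, Fin.val_zero, Nat.zero_add, mul_one, ← mul_pow]
    norm_num
  -- det F2
  have hF2 : ((T.updateRow 0 (Pi.single (Fin.last (m+2)) 1)).updateRow (Fin.last (m+2))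
      (Pi.single 0 1)).det = -(tridiagS (m+1) 2 (-φ)).det := by
    rw [det_row_single _ 0 (Fin.last (m+2)) 1
      (by intro j'
          rw [Matrix.updateRow_ne h0L, Matrix.updateRow_self, Pi.single_apply])]
    set G := (((T.updateRow 0 (Pi.single (Fin.last (m+2)) 1)).updateRow (Fin.last (m+2))
        (Pi.single 0 1)).submatrix (0 : Fin (m+3)).succAbove (Fin.last (m+2)).succAbove)
      with hG
    have hrowlast : ∀ j', G (Fin.last (m+1)) j' = if j' = 0 then 1 else 0 := by
      intro j'
      have hidx : (0 : Fin (m+3)).succAbove (Fin.last (m+1)) = Fin.last (m+2) := by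
        apply Fin.ext; simp [fin_val_succAbove]
      rw [hG, Matrix.submatrix_apply, hidx, Matrix.updateRow_self, Pi.single_apply]
      have hj := j'.isLt
      simp only [Fin.ext_iff, fin_val_succAbove, Fin.val_last, Fin.val_zero]
      split_ifs <;> first | rfl | (exfalso; omega)
    rw [det_row_single G (Fin.last (m+1)) 0 1 hrowlast]
    have hH : (G.submatrix (Fin.last (m+1)).succAbove (0 : Fin (m+2)).succAbove)
        = tridiagS (m+1) 2 (-φ) := by
      ext i j
      have hi := i.isLt; have hj := j.isLt
      have hne1 : (0 : Fin (m+3)).succAbove ((Fin.last (m+1)).succAbove i)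
          ≠ Fin.last (m+2) := by
        intro h; have := congrArg Fin.val h
        simp only [fin_val_succAbove, Fin.val_last, Fin.val_zero] at this
        split_ifs at this <;> omega
      have hne2 : (0 : Fin (m+3)).succAbove ((Fin.last (m+1)).succAbove i) ≠ 0 := by
        intro h; have := congrArg Fin.val h
        simp only [fin_val_succAbove, Fin.val_last, Fin.val_zero] at this
        split_ifs at this <;> omega
      rw [Matrix.submatrix_apply, hG, Matrix.submatrix_apply,
        Matrix.updateRow_ne hne1, Matrix.updateRow_ne hne2]
      simp only [hTdef, tridiagS_apply, fin_val_succAbove, Fin.val_last, Fin.val_zero,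
        dist_eq_one]
      grind
    rw [hH]
    simp only [Fin.val_last, Fin.val_zero, Nat.zero_add, Nat.add_zero]
    have hs1 : (-1 : ℝ)^(m+2) * (-1)^(m+1) = -1 := by
      rw [← pow_add]
      exact Odd.neg_one_pow ⟨m+1, by ring⟩
    calc (-1 : ℝ)^(m+2) * 1 * ((-1)^(m+1) * 1 * (tridiagS (m+1) 2 (-φ)).det)
        = ((-1 : ℝ)^(m+2) * (-1)^(m+1)) * (tridiagS (m+1) 2 (-φ)).det := by ring
      _ = -(tridiagS (m+1) 2 (-φ)).det := by rw [hs1]; ring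
  -- combine
  have hcomm : (T.updateRow (Fin.last (m+2))
        (T (Fin.last (m+2)) + (-φ) • (Pi.single 0 1 : Fin (m+3) → ℝ))).updateRow 0
          (Pi.single (Fin.last (m+2)) 1)
      = (T.updateRow 0 (Pi.single (Fin.last (m+2)) 1)).updateRow (Fin.last (m+2))
          (T (Fin.last (m+2)) + (-φ) • (Pi.single 0 1 : Fin (m+3) → ℝ)) :=
    updateRow_comm' _ hL0 _ _
  have hdetB : (T.updateRow (Fin.last (m+2))
      (T (Fin.last (m+2)) + (-φ) • (Pi.single 0 1 : Fin (m+3) → ℝ))).det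
      = T.det + (-φ) * φ ^ (m+2) := by
    rw [Matrix.det_updateRow_add, Matrix.det_updateRow_smul, Matrix.updateRow_eq_self, hE]
  have hdetF : ((T.updateRow 0 (Pi.single (Fin.last (m+2)) 1)).updateRow (Fin.last (m+2))
      (T (Fin.last (m+2)) + (-φ) • (Pi.single 0 1 : Fin (m+3) → ℝ))).det
      = φ ^ (m+2) + (-φ) * -(tridiagS (m+1) 2 (-φ)).det := by
    rw [Matrix.det_updateRow_add, Matrix.det_updateRow_smul]
    have heq : (T.updateRow 0 (Pi.single (Fin.last (m+2)) 1)).updateRow (Fin.last (m+2))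
        (T (Fin.last (m+2)))
        = T.updateRow 0 (Pi.single (Fin.last (m+2)) 1) := by
      have h : T (Fin.last (m+2))
          = (T.updateRow 0 (Pi.single (Fin.last (m+2)) 1)) (Fin.last (m+2)) := by
        rw [Matrix.updateRow_ne hL0]
      rw [h, Matrix.updateRow_eq_self]
    rw [heq, hF1, hF2]
  have hdetT : T.det = 2 * (tridiagS (m+2) 2 (-φ)).det - φ^2 * (tridiagS (m+1) 2 (-φ)).det := by
    have := tridiag_rec (m+1) 2 (-φ)
    rw [hTdef]
    convert this using 2
    ring
  rw [hA, Matrix.det_updateRow_add, Matrix.det_updateRow_smul]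
  have hB0 : (T.updateRow (Fin.last (m+2))
      (T (Fin.last (m+2)) + (-φ) • (Pi.single 0 1 : Fin (m+3) → ℝ))).updateRow 0 (T 0)
      = T.updateRow (Fin.last (m+2))
          (T (Fin.last (m+2)) + (-φ) • (Pi.single 0 1 : Fin (m+3) → ℝ)) := by
    have h : T 0 = (T.updateRow (Fin.last (m+2))
        (T (Fin.last (m+2)) + (-φ) • (Pi.single 0 1 : Fin (m+3) → ℝ))) 0 := by
      rw [Matrix.updateRow_ne h0L]
    rw [h, Matrix.updateRow_eq_self]
  rw [hB0, hdetB, hcomm, hdetF, hdetT]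
  ring
end

section
/- Let φ be a real number with |φ| < 1 and set s = √(1−φ²). Then for every integer n ≥ 3, det[A_n(φ)] = (1/s)·[(1+s)^n − (1−s)^n] − 2·[ (φ²/(2s))·((1+s)^{n−1} − (1−s)^{n−1}) + φ^n ]. -/
open Matrix

noncomputable def triT (φ : ℝ) (n : ℕ) : Matrix (Fin n) (Fin n) ℝ :=
  Matrix.of fun i j =>
    if i = j then 2 else if Nat.dist i.val j.val = 1 then -φ else 0

lemma val_succAbove {n : ℕ} (p : Fin (n+1)) (i : Fin n) :
    (p.succAbove i).val = if i.val < p.val then i.val else i.val + 1 := by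
  rw [Fin.succAbove]
  split_ifs with h1 h2 h3 <;>
    simp_all [Fin.lt_def, Fin.castSucc, Fin.castAdd, Fin.castLE]

lemma triT_zero (φ : ℝ) : (triT φ 0).det = 1 := Matrix.det_fin_zero

lemma triT_one (φ : ℝ) : (triT φ 1).det = 2 := by
  rw [Matrix.det_fin_one]; rfl

lemma triT_rec (φ : ℝ) (m : ℕ) :
    (triT φ (m+2)).det = 2 * (triT φ (m+1)).det - φ^2 * (triT φ m).det := by
  rw [show (triT φ (m+2)) = (triT φ (m+2)) from rfl, Matrix.det_succ_row_zero]
  rw [Fin.sum_univ_succ, Fin.sum_univ_succ]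
  have hz : ∀ j : Fin m, ((-1:ℝ)) ^ ((j.succ.succ : Fin (m+2)) : ℕ) *
      (triT φ (m+2)) 0 j.succ.succ *
      ((triT φ (m+2)).submatrix Fin.succ (j.succ.succ).succAbove).det = 0 := by
    intro j
    have : (triT φ (m+2)) 0 j.succ.succ = 0 := by
      simp only [triT, Matrix.of_apply, Fin.ext_iff, Nat.dist, Fin.val_zero, Fin.val_succ]
      split_ifs <;> first | rfl | (exfalso; omega) | (exfalso; simp_all)
    rw [this]; ring
  rw [Finset.sum_eq_zero (fun j _ => hz j), add_zero]
  have h00 : (triT φ (m+2)) 0 0 = 2 := by simp [triT]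
  have h01 : (triT φ (m+2)) 0 (Fin.succ 0) = -φ := by
    simp only [triT, Matrix.of_apply, Fin.ext_iff, Nat.dist, Fin.val_zero, Fin.val_succ]
    split_ifs <;> first | rfl | (exfalso; omega) | (exfalso; simp_all)
  have hsub0 : (triT φ (m+2)).submatrix Fin.succ (Fin.succAbove 0) = triT φ (m+1) := by
    ext i j
    simp only [Matrix.submatrix_apply, triT, Matrix.of_apply, Fin.succAbove_zero,
      Fin.ext_iff, Fin.val_succ, Nat.dist.eq_1]
    split_ifs <;> first | rfl | (exfalso; omega) | (exfalso; simp_all)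
  -- minor at (0,1): expand along column 0
  have hM1 : ((triT φ (m+2)).submatrix Fin.succ ((Fin.succ 0 : Fin (m+2)).succAbove)).det
      = -φ * (triT φ m).det := by
    rw [Matrix.det_succ_column_zero, Fin.sum_univ_succ]
    have hone : ((Fin.succ 0 : Fin (m+2)) : ℕ) = 1 := by simp
    have hz2 : ∀ i : Fin m, ((-1:ℝ)) ^ ((i.succ : Fin (m+1)) : ℕ) *
        ((triT φ (m+2)).submatrix Fin.succ ((Fin.succ 0 : Fin (m+2)).succAbove)) i.succ 0 *
        (((triT φ (m+2)).submatrix Fin.succ ((Fin.succ 0 : Fin (m+2)).succAbove)).submatrix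
          i.succ.succAbove Fin.succ).det = 0 := by
      intro i
      have : ((triT φ (m+2)).submatrix Fin.succ ((Fin.succ 0 : Fin (m+2)).succAbove)) i.succ 0 = 0 := by
        simp only [Matrix.submatrix_apply, triT, Matrix.of_apply, Fin.ext_iff, Nat.dist.eq_1,
          Fin.val_succ, val_succAbove, hone, Fin.val_zero]
        split_ifs <;> simp_all <;> omega
      rw [this]; ring
    rw [Finset.sum_eq_zero (fun i _ => hz2 i), add_zero]
    have he : ((triT φ (m+2)).submatrix Fin.succ ((Fin.succ 0 : Fin (m+2)).succAbove)) 0 0 = -φ := by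
      simp only [Matrix.submatrix_apply, triT, Matrix.of_apply, Fin.ext_iff, Nat.dist,
        Fin.val_succ, val_succAbove, hone, Fin.val_zero]
      split_ifs <;> first | rfl | (exfalso; omega) | (exfalso; simp_all)
    have hsub : ((triT φ (m+2)).submatrix Fin.succ ((Fin.succ 0 : Fin (m+2)).succAbove)).submatrix
        (Fin.succAbove 0) Fin.succ = triT φ m := by
      ext i j
      simp only [Matrix.submatrix_apply, triT, Matrix.of_apply, Fin.succAbove_zero,
        Fin.ext_iff, Fin.val_succ, Nat.dist.eq_1, val_succAbove, hone]
      split_ifs <;> first | rfl | (exfalso; omega) | (exfalso; simp_all)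
    rw [hsub, he]
    simp
  rw [h00, h01, hsub0, hM1]
  simp only [Fin.val_zero, Fin.val_succ]
  push_cast
  ring

lemma triT_closed (φ s : ℝ) (hs2 : s^2 = 1 - φ^2) (n : ℕ) :
    2*s*(triT φ n).det = (1+s)^(n+1) - (1-s)^(n+1) := by
  induction n using Nat.twoStepInduction with
  | zero => rw [triT_zero]; ring
  | one => rw [triT_one]; ring
  | more n ih1 ih2 =>
      rw [triT_rec]
      linear_combination 2*ih2 - φ^2*ih1 + ((1-s)^(n+1) - (1+s)^(n+1)) * hs2

set_option maxHeartbeats 1000000 in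
lemma ringA_expand (φ : ℝ) (m : ℕ) :
    (ringA (m+3) φ).det =
      2 * (triT φ (m+2)).det - 2*φ^2 * (triT φ (m+1)).det - 2 * φ^(m+3) := by
  set A := ringA (m+3) φ with hA
  rw [show A.det = _ from Matrix.det_succ_row_zero A, Fin.sum_univ_succ, Fin.sum_univ_succ,
    Fin.sum_univ_castSucc]
  -- middle terms vanish
  have hmid : ∀ j : Fin m, ((-1:ℝ)) ^ (((j.castSucc.succ.succ : Fin (m+3))) : ℕ) *
      A 0 j.castSucc.succ.succ *
      (A.submatrix Fin.succ (j.castSucc.succ.succ).succAbove).det = 0 := by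
    intro j
    have : A 0 j.castSucc.succ.succ = 0 := by
      simp only [hA, ringA, Matrix.of_apply, Fin.ext_iff, Nat.dist.eq_1, Fin.val_zero,
        Fin.val_succ, Fin.coe_castSucc]
      split_ifs <;> simp_all <;> omega
    rw [this]; ring
  rw [Finset.sum_eq_zero (fun j _ => hmid j), zero_add]
  -- entries of row 0
  have h00 : A 0 0 = 2 := by simp [hA, ringA]
  have h01 : A 0 (Fin.succ 0) = -φ := by
    simp only [hA, ringA, Matrix.of_apply, Fin.ext_iff, Nat.dist, Fin.val_zero, Fin.val_succ]
    split_ifs <;> first | rfl | (exfalso; omega) | (exfalso; simp_all)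
  have h0l : A 0 ((Fin.last m).succ.succ) = -φ := by
    simp only [hA, ringA, Matrix.of_apply, Fin.ext_iff, Nat.dist.eq_1, Fin.val_zero, Fin.val_succ,
      Fin.val_last]
    split_ifs <;> simp_all <;> omega
  -- minor at (0,0)
  have hB : A.submatrix Fin.succ (Fin.succAbove 0) = triT φ (m+2) := by
    ext i j
    simp only [Matrix.submatrix_apply, hA, ringA, triT, Matrix.of_apply, Fin.succAbove_zero,
      Fin.ext_iff, Fin.val_succ, Nat.dist.eq_1]
    split_ifs <;> first | rfl | (exfalso; omega) | (exfalso; simp_all)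
  -- minor at (0,1)
  have hM1 : (A.submatrix Fin.succ ((Fin.succ 0 : Fin (m+3)).succAbove)).det
      = -φ * (triT φ (m+1)).det - φ^(m+2) := by
    set M1 := A.submatrix Fin.succ ((Fin.succ 0 : Fin (m+3)).succAbove) with hM
    rw [show M1.det = _ from Matrix.det_succ_column_zero M1, Fin.sum_univ_succ,
      Fin.sum_univ_castSucc]
    have hone : ((Fin.succ 0 : Fin (m+3)) : ℕ) = 1 := by simp
    have hmid2 : ∀ i : Fin m, ((-1:ℝ)) ^ ((i.castSucc.succ : Fin (m+2)) : ℕ) *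
        M1 i.castSucc.succ 0 *
        (M1.submatrix (i.castSucc.succ).succAbove Fin.succ).det = 0 := by
      intro i
      have : M1 i.castSucc.succ 0 = 0 := by
        simp only [hM, Matrix.submatrix_apply, hA, ringA, Matrix.of_apply, Fin.ext_iff,
          Nat.dist.eq_1, Fin.val_succ, Fin.coe_castSucc, val_succAbove, hone, Fin.val_zero]
        split_ifs <;> simp_all <;> omega
      rw [this]; ring
    rw [Finset.sum_eq_zero (fun i _ => hmid2 i), zero_add]
    rw [show ((Fin.last m).succ : Fin (m+2)) = Fin.last (m+1) from Fin.succ_last m]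
    have he0 : M1 0 0 = -φ := by
      simp only [hM, Matrix.submatrix_apply, hA, ringA, Matrix.of_apply, Fin.ext_iff,
        Nat.dist, Fin.val_succ, val_succAbove, hone, Fin.val_zero]
      split_ifs <;> first | rfl | (exfalso; omega) | (exfalso; simp_all)
    have hel : M1 (Fin.last (m+1)) 0 = -φ := by
      simp only [hM, Matrix.submatrix_apply, hA, ringA, Matrix.of_apply, Fin.ext_iff,
        Nat.dist.eq_1, Fin.val_succ, val_succAbove, hone, Fin.val_zero, Fin.val_last]
      split_ifs <;> simp_all <;> omega
    have hs0 : M1.submatrix ((0 : Fin (m+2)).succAbove) Fin.succ = triT φ (m+1) := by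
      ext i j
      simp only [hM, Matrix.submatrix_apply, hA, ringA, triT, Matrix.of_apply,
        Fin.succAbove_zero, Fin.ext_iff, Fin.val_succ, Nat.dist.eq_1, val_succAbove, hone]
      split_ifs <;> first | rfl | (exfalso; omega) | (exfalso; simp_all)
    have hsl : (M1.submatrix ((Fin.last (m+1)).succAbove) Fin.succ).det = (-φ)^(m+1) := by
      set L := M1.submatrix ((Fin.last (m+1)).succAbove) Fin.succ with hL
      have hlow : L.BlockTriangular OrderDual.toDual := by
        intro i j hij
        simp only [OrderDual.toDual_lt_toDual, Fin.lt_def] at hij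
        simp only [hL, hM, Matrix.submatrix_apply, hA, ringA, Matrix.of_apply, Fin.ext_iff,
          Nat.dist, Fin.val_succ, val_succAbove, hone, Fin.val_last]
        split_ifs <;> first | rfl | (exfalso; omega) | (exfalso; simp_all)
      rw [Matrix.det_of_lowerTriangular L hlow]
      have hdiag : ∀ i : Fin (m+1), L i i = -φ := by
        intro i
        simp only [hL, hM, Matrix.submatrix_apply, hA, ringA, Matrix.of_apply, Fin.ext_iff,
          Nat.dist, Fin.val_succ, val_succAbove, hone, Fin.val_last]
        split_ifs <;> first | rfl | (exfalso; omega) | (exfalso; simp_all)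
      simp [hdiag]
    rw [he0, hel, hs0, hsl]
    have : ((-1:ℝ))^((Fin.last (m+1) : Fin (m+2)) : ℕ) * (-φ) * (-φ)^(m+1) = -φ^(m+2) := by
      simp only [Fin.val_last]
      have : ((-1:ℝ))^(m+1) * (-φ)^(m+1) = φ^(m+1) := by rw [← mul_pow]; ring_nf
      calc ((-1:ℝ))^(m+1) * (-φ) * (-φ)^(m+1)
          = (-φ) * (((-1:ℝ))^(m+1) * (-φ)^(m+1)) := by ring
        _ = (-φ) * φ^(m+1) := by rw [this]
        _ = -φ^(m+2) := by ring
    rw [this]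
    simp only [Fin.val_zero]
    ring
  -- minor at (0, last)
  have hlast : ((Fin.last m).succ.succ : Fin (m+3)) = Fin.last (m+2) := by
    apply Fin.ext; simp
  have hMl : (A.submatrix Fin.succ ((Fin.last (m+2)).succAbove)).det
      = (-φ)^(m+2) + ((-1:ℝ))^(m+1) * (-φ) * (triT φ (m+1)).det := by
    set Ml := A.submatrix Fin.succ ((Fin.last (m+2)).succAbove) with hM
    rw [show Ml.det = _ from Matrix.det_succ_column_zero Ml, Fin.sum_univ_succ,
      Fin.sum_univ_castSucc]
    have hlv : ((Fin.last (m+2) : Fin (m+3)) : ℕ) = m + 2 := by simp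
    have hmid2 : ∀ i : Fin m, ((-1:ℝ)) ^ ((i.castSucc.succ : Fin (m+2)) : ℕ) *
        Ml i.castSucc.succ 0 *
        (Ml.submatrix (i.castSucc.succ).succAbove Fin.succ).det = 0 := by
      intro i
      have : Ml i.castSucc.succ 0 = 0 := by
        simp only [hM, Matrix.submatrix_apply, hA, ringA, Matrix.of_apply, Fin.ext_iff,
          Nat.dist, Fin.val_succ, Fin.coe_castSucc, val_succAbove, hlv, Fin.val_zero]
        split_ifs <;> first | rfl | (exfalso; omega) | (exfalso; simp_all)
      rw [this]; ring
    rw [Finset.sum_eq_zero (fun i _ => hmid2 i), zero_add]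
    rw [show ((Fin.last m).succ : Fin (m+2)) = Fin.last (m+1) from Fin.succ_last m]
    have he0 : Ml 0 0 = -φ := by
      simp only [hM, Matrix.submatrix_apply, hA, ringA, Matrix.of_apply, Fin.ext_iff,
        Nat.dist, Fin.val_succ, val_succAbove, hlv, Fin.val_zero]
      split_ifs <;> first | rfl | (exfalso; omega) | (exfalso; simp_all)
    have hel : Ml (Fin.last (m+1)) 0 = -φ := by
      simp only [hM, Matrix.submatrix_apply, hA, ringA, Matrix.of_apply, Fin.ext_iff,
        Nat.dist, Fin.val_succ, val_succAbove, hlv, Fin.val_zero, Fin.val_last]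
      split_ifs <;> first | rfl | (exfalso; omega) | (exfalso; simp_all)
    have hs0 : (Ml.submatrix ((0 : Fin (m+2)).succAbove) Fin.succ).det = (-φ)^(m+1) := by
      set L := Ml.submatrix ((0 : Fin (m+2)).succAbove) Fin.succ with hL
      have hup : L.BlockTriangular id := by
        intro i j hij
        simp only [id, Fin.lt_def] at hij
        simp only [hL, hM, Matrix.submatrix_apply, hA, ringA, Matrix.of_apply, Fin.ext_iff,
          Nat.dist, Fin.val_succ, val_succAbove, hlv, Fin.succAbove_zero]
        split_ifs <;> first | rfl | (exfalso; omega) | (exfalso; simp_all)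
      rw [Matrix.det_of_upperTriangular hup]
      have hdiag : ∀ i : Fin (m+1), L i i = -φ := by
        intro i
        simp only [hL, hM, Matrix.submatrix_apply, hA, ringA, Matrix.of_apply, Fin.ext_iff,
          Nat.dist, Fin.val_succ, val_succAbove, hlv, Fin.succAbove_zero]
        split_ifs <;> first | rfl | (exfalso; omega) | (exfalso; simp_all)
      simp [hdiag]
    have hsl : Ml.submatrix ((Fin.last (m+1)).succAbove) Fin.succ = triT φ (m+1) := by
      ext i j
      simp only [hM, Matrix.submatrix_apply, hA, ringA, triT, Matrix.of_apply, Fin.ext_iff,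
        Nat.dist.eq_1, Fin.val_succ, val_succAbove, hlv, Fin.val_last]
      split_ifs <;> first | rfl | (exfalso; omega) | (exfalso; simp_all)
    rw [he0, hel, hs0, hsl]
    simp only [Fin.val_zero, Fin.val_last]
    ring
  rw [h00, h01, h0l, hB, hlast, hM1, hMl]
  simp only [Fin.val_zero, Fin.val_succ, Fin.val_last, hlast]
  rcases Nat.even_or_odd m with hm | hm
  · have h1 : ((-1:ℝ))^(m+1) = -1 := Odd.neg_one_pow hm.add_one
    have h2 : ((-1:ℝ))^(m+2) = 1 := Even.neg_one_pow (hm.add even_two)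
    have h3 : ((-φ:ℝ))^(m+2) = φ^(m+2) := Even.neg_pow (hm.add even_two) φ
    rw [h1, h2, h3]; ring
  · have hm2 : Odd (m+2) := by rcases hm with ⟨k, hk⟩; exact ⟨k+1, by omega⟩
    have h1 : ((-1:ℝ))^(m+1) = 1 := Even.neg_one_pow hm.add_one
    have h2 : ((-1:ℝ))^(m+2) = -1 := Odd.neg_one_pow hm2
    have h3 : ((-φ:ℝ))^(m+2) = -(φ^(m+2)) := Odd.neg_pow hm2 φ
    rw [h1, h2, h3]; ring

/-- Theorem E.3: closed form of the determinant of the ring-graph CAR precision matrix,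
for `|φ| < 1` and `s = √(1-φ²)`. -/
theorem det_ringA_closed_form (φ : ℝ) (hφ : |φ| < 1) (n : ℕ) (hn : 3 ≤ n) :
    (ringA n φ).det =
      (1 / Real.sqrt (1 - φ ^ 2)) *
          ((1 + Real.sqrt (1 - φ ^ 2)) ^ n - (1 - Real.sqrt (1 - φ ^ 2)) ^ n) -
        2 * ((φ ^ 2 / (2 * Real.sqrt (1 - φ ^ 2))) *
            ((1 + Real.sqrt (1 - φ ^ 2)) ^ (n - 1) - (1 - Real.sqrt (1 - φ ^ 2)) ^ (n - 1)) +
          φ ^ n) := by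
  obtain ⟨m, rfl⟩ : ∃ m, n = m + 3 := ⟨n - 3, by omega⟩
  set s := Real.sqrt (1 - φ ^ 2) with hs
  have habs := abs_lt.mp hφ
  have hpos : 0 < 1 - φ ^ 2 := by nlinarith
  have hs2 : s ^ 2 = 1 - φ ^ 2 := Real.sq_sqrt (le_of_lt hpos)
  have hsne : s ≠ 0 := by
    have := Real.sqrt_pos.mpr hpos
    rw [← hs] at this; exact ne_of_gt this
  have hT2 := triT_closed φ s hs2 (m + 2)
  have hT1 := triT_closed φ s hs2 (m + 1)
  rw [ringA_expand]
  rw [show m + 3 - 1 = m + 2 from rfl]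
  rw [show m + 2 + 1 = m + 3 from rfl] at hT2
  rw [show m + 1 + 1 = m + 2 from rfl] at hT1
  rw [← hT2, ← hT1]
  field_simp
  ring
end

section
/- Let n ≥ 1, let G and H be n×n real symmetric positive definite matrices, let ρ be a real number, and let Q be the n×n diagonal matrix with diagonal entries Q_{ii} = −ρ·√(G_{ii}·H_{ii}). Suppose there is a real number m > 0 such that vᵀGv ≥ m·vᵀv and vᵀHv ≥ m·vᵀv for every v ∈ ℝⁿ, and such that ρ²·G_{ii}·H_{ii} < m² for every i. Then the 2n×2n block matrix P = [[G, Q], [Qᵀ, H]] is positive definite. -/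
open Matrix

/-- Appendix D.2: the joint precision matrix `P = [[G, Q], [Qᵀ, H]]` of `(U, Z)`, with
diagonal cross-precision `Q_{ii} = -ρ √(G_{ii} H_{ii})`, is positive definite whenever
`m` is a positive common lower bound on the quadratic forms of `G` and `H` and
`ρ² G_{ii} H_{ii} < m²` for every `i`. -/
theorem joint_precision_posDef (n : ℕ) (hn : 1 ≤ n)
    (G H : Matrix (Fin n) (Fin n) ℝ) (hG : G.PosDef) (hH : H.PosDef)
    (ρ m : ℝ) (hm : 0 < m)
    (hGm : ∀ v : Fin n → ℝ, m * (v ⬝ᵥ v) ≤ v ⬝ᵥ (G *ᵥ v))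
    (hHm : ∀ v : Fin n → ℝ, m * (v ⬝ᵥ v) ≤ v ⬝ᵥ (H *ᵥ v))
    (hρ : ∀ i : Fin n, ρ ^ 2 * (G i i * H i i) < m ^ 2) :
    (Matrix.fromBlocks G
      (Matrix.diagonal fun i => -ρ * Real.sqrt (G i i * H i i))
      (Matrix.diagonal fun i => -ρ * Real.sqrt (G i i * H i i))ᵀ
      H).PosDef := by
  set d : Fin n → ℝ := fun i => -ρ * Real.sqrt (G i i * H i i) with hd
  set c : Fin n → ℝ := fun i => |ρ| * Real.sqrt (G i i * H i i) with hc
  -- diagonal entries nonneg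
  have hGHnn : ∀ i, 0 ≤ G i i * H i i := by
    intro i
    have h1 := hGm (Pi.single i 1)
    have h2 := hHm (Pi.single i 1)
    simp [dotProduct, mulVec, Pi.single_apply, Finset.sum_ite_eq, mul_comm] at h1 h2
    nlinarith
  have hcm : ∀ i, c i < m := by
    intro i
    have h0 : 0 ≤ c i := by positivity
    have hsq : c i ^ 2 = ρ ^ 2 * (G i i * H i i) := by
      simp only [hc, mul_pow, sq_abs, Real.sq_sqrt (hGHnn i)]
    have : c i ^ 2 < m ^ 2 := by rw [hsq]; exact hρ i
    exact lt_of_pow_lt_pow_left₀ 2 hm.le this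
  have hdc : ∀ i, |d i| = c i := by
    intro i
    simp only [hd, hc, abs_mul, abs_neg, abs_of_nonneg (Real.sqrt_nonneg _)]
  rw [Matrix.posDef_iff_dotProduct_mulVec]
  constructor
  · rw [isHermitian_fromBlocks_iff]
    refine ⟨hG.isHermitian, ?_, ?_, hH.isHermitian⟩
    · simp [Matrix.IsHermitian, conjTranspose, diagonal_transpose]
    · simp [Matrix.IsHermitian, conjTranspose, diagonal_transpose]
  · intro x hx
    set u : Fin n → ℝ := x ∘ Sum.inl with hu
    set v : Fin n → ℝ := x ∘ Sum.inr with hv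
    have hxe : x = Sum.elim u v := by funext j; cases j <;> rfl
    have key : star x ⬝ᵥ ((fromBlocks G (diagonal d) (diagonal d)ᵀ H) *ᵥ x)
        = u ⬝ᵥ (G *ᵥ u) + v ⬝ᵥ (H *ᵥ v) + ∑ i, 2 * (d i * (u i * v i)) := by
      have e : ∀ a b : Fin n → ℝ, a ⬝ᵥ ((diagonal d) *ᵥ b) = ∑ i, d i * (a i * b i) := by
        intro a b
        simp only [dotProduct, mulVec_diagonal]
        exact Finset.sum_congr rfl fun i _ => by ring
      rw [hxe]
      simp only [star_trivial, fromBlocks_mulVec, Sum.elim_comp_inl, Sum.elim_comp_inr,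
        sumElim_dotProduct_sumElim, dotProduct_add, diagonal_transpose, e]
      have e2 : ∑ i, d i * (u i * v i) + ∑ i, d i * (v i * u i)
          = ∑ i, 2 * (d i * (u i * v i)) := by
        rw [← Finset.sum_add_distrib]
        exact Finset.sum_congr rfl fun i _ => by ring
      linarith [e2]
    rw [key]
    -- lower bound
    have hcross : ∀ i, -(c i * (u i ^ 2 + v i ^ 2)) ≤ 2 * (d i * (u i * v i)) := by
      intro i
      have h1 : |2 * (d i * (u i * v i))| ≤ c i * (u i ^ 2 + v i ^ 2) := by
        rw [abs_mul, abs_two, abs_mul, hdc i, abs_mul]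
        have h2 : 2 * (|u i| * |v i|) ≤ u i ^ 2 + v i ^ 2 := by
          nlinarith [sq_nonneg (|u i| - |v i|), sq_abs (u i), sq_abs (v i)]
        have h3 : 0 ≤ c i := by rw [← hdc i]; exact abs_nonneg _
        nlinarith [abs_nonneg (u i), abs_nonneg (v i)]
      linarith [neg_abs_le (2 * (d i * (u i * v i)))]
    have hne : ∃ i, u i ^ 2 + v i ^ 2 ≠ 0 := by
      by_contra hcon
      push_neg at hcon
      apply hx
      funext j
      cases j with
      | inl i => have := hcon i; have : u i = 0 := by nlinarith [sq_nonneg (u i), sq_nonneg (v i)]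
                 exact this
      | inr i => have := hcon i; have : v i = 0 := by nlinarith [sq_nonneg (u i), sq_nonneg (v i)]
                 exact this
    obtain ⟨i₀, hi₀⟩ := hne
    have hpos : 0 < ∑ i, (m - c i) * (u i ^ 2 + v i ^ 2) := by
      apply Finset.sum_pos' (fun i _ => by nlinarith [hcm i, sq_nonneg (u i), sq_nonneg (v i)])
      refine ⟨i₀, Finset.mem_univ _, ?_⟩
      have h1 : 0 < u i₀ ^ 2 + v i₀ ^ 2 :=
        lt_of_le_of_ne (by positivity) (Ne.symm hi₀)
      have h2 : 0 < m - c i₀ := by linarith [hcm i₀]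
      positivity
    have hsum : ∑ i, (m - c i) * (u i ^ 2 + v i ^ 2)
        ≤ u ⬝ᵥ (G *ᵥ u) + v ⬝ᵥ (H *ᵥ v) + ∑ i, 2 * (d i * (u i * v i)) := by
      have e1 : ∑ i, (m - c i) * (u i ^ 2 + v i ^ 2)
          = m * (u ⬝ᵥ u) + m * (v ⬝ᵥ v) + ∑ i, -(c i * (u i ^ 2 + v i ^ 2)) := by
        simp only [dotProduct, Finset.mul_sum, ← Finset.sum_add_distrib]
        apply Finset.sum_congr rfl
        intro i _
        ring
      rw [e1]
      have := hGm u
      have := hHm v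
      have := Finset.sum_le_sum (fun i (_ : i ∈ Finset.univ) => hcross i)
      linarith
    linarith
end

section
/- Let n > p ≥ 1 be integers, let X be an n×p real matrix such that XᵀX is invertible, let Z be the k-th column of X for some k ∈ {1,…,p}, and let Y ∈ ℝⁿ. Let τ_U, τ_ε, τ_Z > 0 and ρ ∈ (−1, 1), and set σ² = τ_U⁻¹ + τ_ε⁻¹, φ = τ_Z·(1−ρ²), V = σ²·I_n, A = φ⁻¹·I_n, and B = ρ·√(τ_Z/τ_U)·I_n. Define F = −(1/2)·log( det(V)·det(A)·det(XᵀV⁻¹X) ) − (1/2)·[ (Y − B·Z)ᵀ·( V⁻¹ − V⁻¹X(XᵀV⁻¹X)⁻¹XᵀV⁻¹ )·(Y − B·Z) + Zᵀ·A⁻¹·Z ]. Then F = −(1/2)·log det(XᵀX) − ((n−p)/2)·log σ² + (n/2)·log φ − (1/2)·σ⁻²·Yᵀ·(I_n − X(XᵀX)⁻¹Xᵀ)·Y − (1/2)·φ·ZᵀZ. In particular, F depends on (τ_U, τ_ε, τ_Z, ρ) only through (σ², φ) = (τ_U⁻¹ + τ_ε⁻¹, τ_Z·(1−ρ²)). 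-/
open Matrix

/-- Lack-of-identifiability in the non-spatial case: when the precision matrices of the
unmeasured confounder `U`, exposure `Z`, and noise `ε` are scalar, the log restricted
likelihood depends on `(τ_U, τ_ε, τ_Z, ρ)` only through `σ² = τ_U⁻¹ + τ_ε⁻¹` and
`φ = τ_Z (1 - ρ²)`. -/
theorem nonspatial_restricted_likelihood (n p : ℕ) (hp : 1 ≤ p) (hnp : p < n)
    (X : Matrix (Fin n) (Fin p) ℝ) (hX : IsUnit (Xᵀ * X))
    (k : Fin p) (Y : Fin n → ℝ)
    (τU τε τZ ρ : ℝ) (hτU : 0 < τU) (hτε : 0 < τε) (hτZ : 0 < τZ)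
    (hρ : ρ ∈ Set.Ioo (-1 : ℝ) 1) :
    let Z : Fin n → ℝ := fun i => X i k
    let σ2 : ℝ := τU⁻¹ + τε⁻¹
    let φ : ℝ := τZ * (1 - ρ ^ 2)
    let V : Matrix (Fin n) (Fin n) ℝ := σ2 • 1
    let A : Matrix (Fin n) (Fin n) ℝ := φ⁻¹ • 1
    let B : Matrix (Fin n) (Fin n) ℝ := (ρ * Real.sqrt (τZ / τU)) • 1;
    (-(1 / 2) * Real.log (V.det * A.det * (Xᵀ * V⁻¹ * X).det) -
        (1 / 2) * (((Y - B *ᵥ Z) ⬝ᵥ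
            ((V⁻¹ - V⁻¹ * X * (Xᵀ * V⁻¹ * X)⁻¹ * Xᵀ * V⁻¹) *ᵥ (Y - B *ᵥ Z))) +
          Z ⬝ᵥ (A⁻¹ *ᵥ Z))) =
      (-(1 / 2) * Real.log (Xᵀ * X).det -
        ((n : ℝ) - (p : ℝ)) / 2 * Real.log σ2 +
        (n : ℝ) / 2 * Real.log φ -
        (1 / 2) * σ2⁻¹ * (Y ⬝ᵥ ((1 - X * (Xᵀ * X)⁻¹ * Xᵀ) *ᵥ Y)) -
        (1 / 2) * φ * (Z ⬝ᵥ Z)) := by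
  intro Z σ2 φ V A B
  have hσ2 : 0 < σ2 := by positivity
  have hρ2 : ρ ^ 2 < 1 := by
    have := abs_lt.mpr ⟨hρ.1, hρ.2⟩
    nlinarith [sq_abs ρ, abs_nonneg ρ]
  have hφ : 0 < φ := by
    have : 0 < 1 - ρ ^ 2 := by linarith
    positivity
  have hσ2' : σ2 ≠ 0 := hσ2.ne'
  have hφ' : φ ≠ 0 := hφ.ne'
  have hdet : (Xᵀ * X).det ≠ 0 := by
    have := (isUnit_iff_isUnit_det _).mp hX
    exact this.ne_zero
  have hdetU : IsUnit (Xᵀ * X).det := (isUnit_iff_isUnit_det _).mp hX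
  -- inverses of scalar matrices
  have hinv : ∀ (a : ℝ), a ≠ 0 → ((a • (1 : Matrix (Fin n) (Fin n) ℝ)))⁻¹ = a⁻¹ • 1 := by
    intro a ha
    apply inv_eq_right_inv
    rw [smul_mul_smul_comm, one_mul, mul_inv_cancel₀ ha, one_smul]
  have hVinv : V⁻¹ = σ2⁻¹ • 1 := hinv σ2 hσ2'
  have hAinv : A⁻¹ = φ • 1 := by
    rw [show A = φ⁻¹ • 1 from rfl, hinv φ⁻¹ (inv_ne_zero hφ'), inv_inv]
  have hXVX : Xᵀ * V⁻¹ * X = σ2⁻¹ • (Xᵀ * X) := by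
    rw [hVinv, Matrix.mul_smul, Matrix.mul_one, Matrix.smul_mul]
  have hXVXinv : (Xᵀ * V⁻¹ * X)⁻¹ = σ2 • (Xᵀ * X)⁻¹ := by
    rw [hXVX]
    apply inv_eq_right_inv
    rw [smul_mul_smul_comm, inv_mul_cancel₀ hσ2', Matrix.mul_nonsing_inv _ hdetU, one_smul]
  -- the middle matrix
  have hM : V⁻¹ - V⁻¹ * X * (Xᵀ * V⁻¹ * X)⁻¹ * Xᵀ * V⁻¹
      = σ2⁻¹ • (1 - X * (Xᵀ * X)⁻¹ * Xᵀ) := by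
    rw [hXVXinv, hVinv, smul_sub]
    congr 1
    simp only [Matrix.smul_mul, Matrix.mul_smul, Matrix.one_mul, Matrix.mul_one, smul_smul,
      Matrix.mul_assoc]
    congr 1
    field_simp
  set P : Matrix (Fin n) (Fin n) ℝ := X * (Xᵀ * X)⁻¹ * Xᵀ with hP
  -- Z is the k-th column of X
  have hZ : Z = X *ᵥ Pi.single k 1 := by
    funext i
    simp [Z, mulVec, dotProduct, Pi.single_apply]
  have hmat : P * X = X := by
    rw [hP, Matrix.mul_assoc, Matrix.mul_assoc, Matrix.nonsing_inv_mul _ hdetU, Matrix.mul_one]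
  have hPZ : P *ᵥ Z = Z := by
    rw [hZ, mulVec_mulVec, hmat]
  have hWZ : (1 - P) *ᵥ Z = 0 := by
    rw [sub_mulVec, hPZ, one_mulVec, sub_self]
  have hWsymm : (1 - P)ᵀ = 1 - P := by
    rw [transpose_sub, transpose_one, hP, transpose_mul, transpose_mul, transpose_transpose,
      transpose_nonsing_inv, transpose_mul, transpose_transpose, Matrix.mul_assoc]
  -- quadratic form
  set c : ℝ := ρ * Real.sqrt (τZ / τU) with hc
  have hBZ : B *ᵥ Z = c • Z := by
    rw [show B = c • 1 from rfl, smul_mulVec, one_mulVec]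
  have hquad : (Y - B *ᵥ Z) ⬝ᵥ ((V⁻¹ - V⁻¹ * X * (Xᵀ * V⁻¹ * X)⁻¹ * Xᵀ * V⁻¹) *ᵥ (Y - B *ᵥ Z))
      = σ2⁻¹ * (Y ⬝ᵥ ((1 - P) *ᵥ Y)) := by
    rw [hM, hBZ, smul_mulVec, dotProduct_smul]
    congr 1
    have h1 : (1 - P) *ᵥ (Y - c • Z) = (1 - P) *ᵥ Y := by
      rw [mulVec_sub, mulVec_smul, hWZ, smul_zero, sub_zero]
    rw [h1, sub_dotProduct, smul_dotProduct]
    have h2 : Z ⬝ᵥ ((1 - P) *ᵥ Y) = 0 := by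
      rw [dotProduct_mulVec, ← mulVec_transpose, hWsymm, hWZ, zero_dotProduct]
    rw [h2, smul_zero, sub_zero]
  -- A⁻¹ quadratic
  have hAZ : Z ⬝ᵥ (A⁻¹ *ᵥ Z) = φ * (Z ⬝ᵥ Z) := by
    rw [hAinv, smul_mulVec, one_mulVec, dotProduct_smul, smul_eq_mul]
  -- determinants
  have hdetV : V.det = σ2 ^ n := by simp [V, det_smul]
  have hdetA : A.det = (φ⁻¹) ^ n := by simp [A, det_smul]
  have hdetXVX : (Xᵀ * V⁻¹ * X).det = (σ2⁻¹) ^ p * (Xᵀ * X).det := by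
    rw [hXVX, det_smul]; simp
  rw [hquad, hAZ, hdetV, hdetA, hdetXVX]
  have hlog : Real.log (σ2 ^ n * φ⁻¹ ^ n * (σ2⁻¹ ^ p * (Xᵀ * X).det))
      = (n : ℝ) * Real.log σ2 - (n : ℝ) * Real.log φ - (p : ℝ) * Real.log σ2
        + Real.log (Xᵀ * X).det := by
    rw [Real.log_mul (by positivity) (by positivity), Real.log_mul (by positivity) (by positivity),
      Real.log_mul (pow_ne_zero _ (inv_ne_zero hσ2')) hdet, Real.log_pow, Real.log_pow, Real.log_pow,
      Real.log_inv, Real.log_inv]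
    ring
  rw [hlog]
  ring
end
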